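/- Let G be a d-regular graph on n vertices with d ≥ 2n/3 and n ≡ 0 (mod 3), say n = 3q. Then G contains a spanning subgraph that is the vertex-disjoint union of q copies of the star K_{1,2}. -/

import Mathlib

set_option maxRecDepth 10000
set_option linter.unusedSectionVars false
open Finset
namespace Stmt7Aux

lemma nine : ∀ p : Fin 3 → Fin 3 → Bool,
    7 ≤ (∑ i : Fin 3, ∑ j : Fin 3, (if p i j then 1 else 0 : ℕ)) →
    ∃ i0 i1 i2 j0 j1 j2 : Fin 3, i0 ≠ i1 ∧ i0 ≠ i2 ∧ i1 ≠ i2 ∧ j0 ≠ j1 ∧ j0 ≠ j2 ∧ j1 ≠ j2 ∧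
      p i0 j1 ∧ p i0 j2 ∧ p i1 j0 ∧ p i2 j0 := by decide

variable {V : Type*} [DecidableEq V]

def Good (G : SimpleGraph V) (t : Finset V) : Prop :=
  ∃ a b c : V, t = {a, b, c} ∧ G.Adj a b ∧ G.Adj a c ∧ b ≠ c

def Valid (G : SimpleGraph V) (F : Finset (Finset V)) : Prop :=
  (∀ t ∈ F, Good G t) ∧ (F : Set (Finset V)).PairwiseDisjoint id

lemma Good.card_eq {G : SimpleGraph V} {t : Finset V} (h : Good G t) : t.card = 3 := by
  obtain ⟨a, b, c, rfl, hab, hac, hbc⟩ := h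
  rw [card_insert_of_notMem (by simp [hab.ne, hac.ne]),
    card_insert_of_notMem (by simp [hbc]), card_singleton]

lemma card_biUnion_valid {G : SimpleGraph V} {F : Finset (Finset V)} (h : Valid G F) :
    (F.biUnion id).card = 3 * F.card := by
  rw [card_biUnion (fun t ht t' ht' htt' => h.2 (mem_coe.2 ht) (mem_coe.2 ht') htt'),
    Finset.sum_congr rfl fun t ht => show (id t).card = 3 from (h.1 t ht).card_eq]
  simp [mul_comm]

lemma vec3_mem {a b c : V} : ∀ j : Fin 3, (![a, b, c]) j ∈ ({a, b, c} : Finset V) := by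
  intro j; fin_cases j <;> simp

lemma vec3_inj {a b c : V} (hab : a ≠ b) (hac : a ≠ c) (hbc : b ≠ c) :
    Function.Injective ![a, b, c] := by
  intro i j h
  fin_cases i <;> fin_cases j <;> simp_all

lemma extend_family {V : Type*} [Fintype V] [DecidableEq V] (G : SimpleGraph V)
    [DecidableRel G.Adj] {d q : ℕ} (hreg : G.IsRegularOfDegree d) (hdq : 2 * q ≤ d)
    (hn : Fintype.card V = 3 * q) {F : Finset (Finset V)} (hF : Valid G F)
    (hmax : ∀ F', Valid G F' → F'.card ≤ F.card) (hlt : F.card < q) : False := by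
  classical
  set k := F.card with hk
  set U : Finset V := F.biUnion id with hU
  set R : Finset V := Finset.univ \ U with hRdef
  have hUcard : U.card = 3 * k := card_biUnion_valid hF
  have hUR : ∀ {v : V}, v ∈ R ↔ v ∉ U := by intro v; simp [hRdef]
  have htU : ∀ {t : Finset V}, t ∈ F → t ⊆ U := fun ht => subset_biUnion_of_mem id ht
  have hRcard : 3 ≤ R.card := by
    have h1 : R.card = Fintype.card V - U.card := by
      rw [hRdef, card_sdiff, inter_univ, card_univ]
    omega
  -- Step A: no vertex of R has two neighbors in R
  have stepA : ∀ r ∈ R, (G.neighborFinset r ∩ R).card ≤ 1 := by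
    intro r hr
    by_contra hcon
    rw [not_le] at hcon
    obtain ⟨u, hu, v, hv, huv⟩ := Finset.one_lt_card.1 hcon
    rw [mem_inter, SimpleGraph.mem_neighborFinset] at hu hv
    set t : Finset V := {r, u, v} with ht
    have htR : ∀ w ∈ t, w ∈ R := by
      intro w hw
      rcases mem_insert.1 hw with rfl | hw
      · exact hr
      · rcases mem_insert.1 hw with rfl | hw
        · exact hu.2
        · rw [mem_singleton.1 hw]; exact hv.2
    have htF : t ∉ F := fun h => (hUR.1 hr) (htU h (by simp [ht]))
    have hnew : Valid G (insert t F) := by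
      constructor
      · intro s hs
        rcases mem_insert.1 hs with rfl | hs
        · exact ⟨r, u, v, rfl, hu.1, hv.1, huv⟩
        · exact hF.1 s hs
      · rw [coe_insert]
        refine hF.2.insert ?_
        intro s hs _
        rw [Finset.disjoint_left]
        intro w hw hws
        exact (hUR.1 (htR w hw)) (htU (mem_coe.1 hs) hws)
    have := hmax _ hnew
    rw [card_insert_of_notMem htF] at this
    omega
  -- pick x y z in R
  have hR2 : 2 < R.card := by omega
  obtain ⟨x, y, z, hxR, hyR, hzR, hxy, hxz, hyz⟩ := Finset.two_lt_card_iff.1 hR2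
  set rr : Fin 3 → V := ![x, y, z] with hrr
  have hrrinj : Function.Injective rr := vec3_inj hxy hxz hyz
  have hrrR : ∀ i, rr i ∈ R := by
    intro i
    fin_cases i
    · simpa [hrr] using hxR
    · simpa [hrr] using hyR
    · simpa [hrr] using hzR
  -- counting
  have key : ∀ r ∈ R, d ≤ 1 + ∑ t ∈ F, (G.neighborFinset r ∩ t).card := by
    intro r hr
    have h1 : (G.neighborFinset r ∩ U).card = ∑ t ∈ F, (G.neighborFinset r ∩ t).card := by
      have he : G.neighborFinset r ∩ U = F.biUnion (fun t => G.neighborFinset r ∩ t) := by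
        ext w
        simp only [mem_inter, hU, mem_biUnion, id]
        tauto
      rw [he, card_biUnion]
      intro t ht t' ht' h
      exact Finset.disjoint_of_subset_left inter_subset_right
        (Finset.disjoint_of_subset_right inter_subset_right
          (hF.2 (mem_coe.2 ht) (mem_coe.2 ht') h))
    have h2 : G.neighborFinset r ⊆ (G.neighborFinset r ∩ U) ∪ (G.neighborFinset r ∩ R) := by
      intro w hw
      simp only [mem_union, mem_inter]
      by_cases hwU : w ∈ U
      · exact Or.inl ⟨hw, hwU⟩
      · exact Or.inr ⟨hw, hUR.2 hwU⟩
    have h3 := (card_le_card h2).trans (card_union_le _ _)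
    have h4 : (G.neighborFinset r).card = d := hreg r
    have h5 := stepA r hr
    omega
  have exP : ∃ t ∈ F, 7 ≤ ∑ i : Fin 3, (G.neighborFinset (rr i) ∩ t).card := by
    by_contra hco
    push_neg at hco
    have hle : ∑ t ∈ F, ∑ i : Fin 3, (G.neighborFinset (rr i) ∩ t).card ≤ 6 * k := by
      calc ∑ t ∈ F, ∑ i : Fin 3, (G.neighborFinset (rr i) ∩ t).card
          ≤ ∑ _t ∈ F, 6 := Finset.sum_le_sum fun t ht => by
            have := hco t ht; omega
        _ = 6 * k := by rw [Finset.sum_const, smul_eq_mul, mul_comm]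
    rw [Finset.sum_comm, Fin.sum_univ_three] at hle
    have k0 := key _ (hrrR 0)
    have k1 := key _ (hrrR 1)
    have k2 := key _ (hrrR 2)
    omega
  obtain ⟨P, hPF, hP7⟩ := exP
  obtain ⟨a, b, c, hPeq, hab, hac, hbc⟩ := hF.1 P hPF
  set cc : Fin 3 → V := ![a, b, c] with hcc
  have hccinj : Function.Injective cc := vec3_inj hab.ne hac.ne hbc
  have hccP : ∀ j, cc j ∈ P := by rw [hPeq]; exact vec3_mem
  have hccU : ∀ j, cc j ∈ U := fun j => htU hPF (hccP j)
  have hrrcc : ∀ i j, rr i ≠ cc j := fun i j h => (hUR.1 (hrrR i)) (h ▸ hccU j)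
  -- row counts
  have row : ∀ i : Fin 3, (G.neighborFinset (rr i) ∩ P).card
      = ∑ j : Fin 3, (if G.Adj (rr i) (cc j) then 1 else 0) := by
    intro i
    rw [hPeq]
    have h1 : G.neighborFinset (rr i) ∩ ({a, b, c} : Finset V)
        = ({a, b, c} : Finset V).filter (fun w => G.Adj (rr i) w) := by
      ext w
      simp only [mem_inter, SimpleGraph.mem_neighborFinset, mem_filter]
      tauto
    rw [h1, card_filter, Fin.sum_univ_three,
      Finset.sum_insert (by simp [hab.ne, hac.ne]),
      Finset.sum_insert (by simp [hbc]), Finset.sum_singleton]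
    simp only [hcc, Matrix.cons_val_zero, Matrix.cons_val_one, Matrix.head_cons,
      Matrix.cons_val_two, Matrix.tail_cons]
    omega
  set p : Fin 3 → Fin 3 → Bool := fun i j => decide (G.Adj (rr i) (cc j)) with hp
  have h7 : 7 ≤ ∑ i : Fin 3, ∑ j : Fin 3, (if p i j then 1 else 0 : ℕ) := by
    refine le_trans hP7 (le_of_eq ?_)
    refine Finset.sum_congr rfl fun i _ => ?_
    rw [row i]
    refine Finset.sum_congr rfl fun j _ => ?_
    simp [hp]
  obtain ⟨i0, i1, i2, j0, j1, j2, hi01, hi02, hi12, hj01, hj02, hj12,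
    h01, h02, h10, h20⟩ := nine p h7
  have a01 : G.Adj (rr i0) (cc j1) := by simpa [hp] using h01
  have a02 : G.Adj (rr i0) (cc j2) := by simpa [hp] using h02
  have a10 : G.Adj (rr i1) (cc j0) := by simpa [hp] using h10
  have a20 : G.Adj (rr i2) (cc j0) := by simpa [hp] using h20
  set t1 : Finset V := {rr i0, cc j1, cc j2} with ht1
  set t2 : Finset V := {cc j0, rr i1, rr i2} with ht2
  have g1 : Good G t1 := ⟨rr i0, cc j1, cc j2, rfl, a01, a02, fun h => hj12 (hccinj h)⟩
  have g2 : Good G t2 := ⟨cc j0, rr i1, rr i2, rfl, a10.symm, a20.symm,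
    fun h => hi12 (hrrinj h)⟩
  -- membership characterizations
  have hmem1 : ∀ w ∈ t1, w = rr i0 ∨ w = cc j1 ∨ w = cc j2 := by
    intro w hw; simpa [ht1] using hw
  have hmem2 : ∀ w ∈ t2, w = cc j0 ∨ w = rr i1 ∨ w = rr i2 := by
    intro w hw; simpa [ht2] using hw
  -- disjointness with old sets
  have hdisj_old : ∀ s ∈ F, s ≠ P → Disjoint t1 s ∧ Disjoint t2 s := by
    intro s hs hsP
    have hsU : s ⊆ U := htU hs
    have hsPd : Disjoint s P := hF.2 (mem_coe.2 hs) (mem_coe.2 hPF) hsP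
    have hccs : ∀ j, cc j ∉ s := fun j h => (Finset.disjoint_left.1 hsPd h) (hccP j)
    have hrrs : ∀ i, rr i ∉ s := fun i h => (hUR.1 (hrrR i)) (hsU h)
    constructor <;> rw [Finset.disjoint_left] <;> intro w hw hws
    · rcases hmem1 w hw with rfl | rfl | rfl
      · exact hrrs i0 hws
      · exact hccs j1 hws
      · exact hccs j2 hws
    · rcases hmem2 w hw with rfl | rfl | rfl
      · exact hccs j0 hws
      · exact hrrs i1 hws
      · exact hrrs i2 hws
  have hd12 : Disjoint t1 t2 := by
    rw [Finset.disjoint_left]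
    intro w hw hw2
    rcases hmem1 w hw with rfl | rfl | rfl <;> rcases hmem2 _ hw2 with h | h | h
    · exact hrrcc i0 j0 h
    · exact hi01 (hrrinj h)
    · exact hi02 (hrrinj h)
    · exact hj01 (hccinj h).symm
    · exact hrrcc i1 j1 h.symm
    · exact hrrcc i2 j1 h.symm
    · exact hj02 (hccinj h).symm
    · exact hrrcc i1 j2 h.symm
    · exact hrrcc i2 j2 h.symm
  -- t1, t2 not in F-ish sets
  have ht1F : ∀ s ∈ F, t1 ≠ s := by
    intro s hs h
    exact (hUR.1 (hrrR i0)) (htU hs (h ▸ (by simp [ht1] : rr i0 ∈ t1)))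
  have ht2F : ∀ s ∈ F, t2 ≠ s := by
    intro s hs h
    exact (hUR.1 (hrrR i1)) (htU hs (h ▸ (by simp [ht2] : rr i1 ∈ t2)))
  have ht12 : t1 ≠ t2 := by
    intro h
    have : rr i0 ∈ t2 := h ▸ (by simp [ht1] : rr i0 ∈ t1)
    exact absurd this (Finset.disjoint_left.1 hd12 (by simp [ht1]))
  set F' : Finset (Finset V) := insert t1 (insert t2 (F.erase P)) with hF'
  have hvalid' : Valid G F' := by
    constructor
    · intro s hs
      rcases mem_insert.1 hs with rfl | hs
      · exact g1
      rcases mem_insert.1 hs with rfl | hs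
      · exact g2
      · exact hF.1 s (Finset.mem_of_mem_erase hs)
    · rw [hF', coe_insert, coe_insert]
      refine (Set.PairwiseDisjoint.insert ?_ ?_).insert ?_
      · exact hF.2.subset (by intro s hs; exact mem_coe.2 (Finset.mem_of_mem_erase (mem_coe.1 hs)))
      · intro s hs _
        have hsF := Finset.mem_of_mem_erase (mem_coe.1 hs)
        have hsP := Finset.ne_of_mem_erase (mem_coe.1 hs)
        exact (hdisj_old s hsF hsP).2
      · intro s hs _
        rcases hs with rfl | hs
        · exact hd12
        · have hsF := Finset.mem_of_mem_erase (mem_coe.1 hs)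
          have hsP := Finset.ne_of_mem_erase (mem_coe.1 hs)
          exact (hdisj_old s hsF hsP).1
  have hcard' : F'.card = k + 1 := by
    have h2 : t2 ∉ F.erase P := fun h => ht2F _ (Finset.mem_of_mem_erase h) rfl
    have h1 : t1 ∉ insert t2 (F.erase P) := by
      intro h
      rcases mem_insert.1 h with h | h
      · exact ht12 h
      · exact ht1F _ (Finset.mem_of_mem_erase h) rfl
    have hk1 : 0 < k := Finset.card_pos.2 ⟨P, hPF⟩
    rw [hF', card_insert_of_notMem h1, card_insert_of_notMem h2,
      Finset.card_erase_of_mem hPF]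
    omega
  have := hmax _ hvalid'
  omega

end Stmt7Aux

open Stmt7Aux Finset

/-- A `d`-regular graph on `n = 3q` vertices with `d ≥ 2n/3` has a spanning subgraph that is
the vertex-disjoint union of `q` copies of `K_{1,2}` (the equivalence `e` enumerates the
vertices; `e (i,0)` is the center of the `i`-th star). -/
theorem stmt7 {V : Type*} [Fintype V] (G : SimpleGraph V) [DecidableRel G.Adj]
    (n d q : ℕ) (hn : Fintype.card V = n) (hreg : G.IsRegularOfDegree d)
    (hd : 2 * n ≤ 3 * d) (hq : n = 3 * q) :
    ∃ e : (Fin q × Fin 3) ≃ V, ∀ i : Fin q,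
      G.Adj (e (i, 0)) (e (i, 1)) ∧ G.Adj (e (i, 0)) (e (i, 2)) := by
  classical
  subst hq
  obtain ⟨F, hFvalid, hmax⟩ : ∃ F, Valid G F ∧ ∀ F', Valid G F' → F'.card ≤ F.card := by
    obtain ⟨F, hF, hmaxF⟩ := Finset.exists_max_image
      (Finset.univ.filter fun F : Finset (Finset V) => Valid G F) Finset.card
      ⟨∅, Finset.mem_filter.2 ⟨Finset.mem_univ _, fun t ht => by simp at ht,
        by rw [Finset.coe_empty]; exact Set.pairwiseDisjoint_empty⟩⟩
    exact ⟨F, (Finset.mem_filter.1 hF).2,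
      fun F' h => hmaxF F' (Finset.mem_filter.2 ⟨Finset.mem_univ _, h⟩)⟩
  have hcard_le : F.card ≤ q := by
    have h1 := card_biUnion_valid hFvalid
    have h2 := Finset.card_le_card (Finset.subset_univ (F.biUnion id))
    rw [Finset.card_univ, hn] at h2
    omega
  have hcard : F.card = q := by
    by_contra h
    exact extend_family G hreg (by omega) hn hFvalid hmax (by omega)
  -- enumerate F
  set σ : Fin q → {t // t ∈ F} := fun i => F.equivFin.symm (Fin.cast hcard.symm i) with hσ
  have hσinj : Function.Injective σ := fun i j h => by
    have := F.equivFin.symm.injective h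
    exact Fin.cast_injective _ this
  have hgood : ∀ i : Fin q, Good G (σ i : Finset V) := fun i => hFvalid.1 _ (σ i).2
  choose a b c hset hab hac hbc using hgood
  set φ : Fin q × Fin 3 → V := fun p => ![a p.1, b p.1, c p.1] p.2 with hφ
  have hmemφ : ∀ p : Fin q × Fin 3, φ p ∈ (σ p.1 : Finset V) := by
    intro p
    rw [hset p.1]
    exact vec3_mem p.2
  have hinj : Function.Injective φ := by
    rintro ⟨i, j⟩ ⟨i', j'⟩ hEq
    by_cases hii : i = i'
    · subst hii
      have hj : j = j' := vec3_inj (hab i).ne (hac i).ne (hbc i) hEq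
      rw [hj]
    · exfalso
      have hne : (σ i : Finset V) ≠ (σ i' : Finset V) := by
        intro h
        exact hii (hσinj (Subtype.ext h))
      have hdisj := hFvalid.2 (Finset.mem_coe.2 (σ i).2) (Finset.mem_coe.2 (σ i').2) hne
      have h1 := hmemφ (i, j)
      have h2 := hmemφ (i', j')
      rw [hEq] at h1
      exact (Finset.disjoint_left.1 hdisj h1) h2
  have hbij : Function.Bijective φ := by
    rw [Fintype.bijective_iff_injective_and_card]
    refine ⟨hinj, ?_⟩
    rw [Fintype.card_prod, Fintype.card_fin, Fintype.card_fin, hn]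
    ring
  refine ⟨Equiv.ofBijective φ hbij, fun i => ?_⟩
  have e0 : Equiv.ofBijective φ hbij (i, 0) = a i := rfl
  have e1 : Equiv.ofBijective φ hbij (i, 1) = b i := rfl
  have e2 : Equiv.ofBijective φ hbij (i, 2) = c i := rfl
  rw [e0, e1, e2]
  exact ⟨hab i, hac i⟩
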